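/- Let λ = (λ_1,…,λ_m) and λ' = (λ'_1,…,λ'_{m'}) be partitions of n and let φ : R_λ → R_{λ'} be a graded ring isomorphism. Then there is a bijection τ : {1,…,m} → {1,…,m'} with λ'_{τ(i)} = λ_i for all i, such that φ maps the subring of R_λ generated by x_{i,1},…,x_{i,λ_i} onto the subring of R_{λ'} generated by x_{τ(i),1},…,x_{τ(i),λ'_{τ(i)}}. -/

import Mathlib

set_option maxHeartbeats 1000000
set_option synthInstance.maxHeartbeats 1000000
set_option linter.unusedVariables false
set_option linter.unreachableTactic false
set_option linter.unusedTactic false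

/-- The detector ring ℤ[e,f]/(e²,f²): elements a + b·e + c·f + d·ef. -/
@[ext] structure Z4 where
  a : ℤ
  b : ℤ
  c : ℤ
  d : ℤ

namespace Z4

instance : Zero Z4 := ⟨⟨0,0,0,0⟩⟩
instance : One Z4 := ⟨⟨1,0,0,0⟩⟩
instance : Add Z4 := ⟨fun x y => ⟨x.a+y.a, x.b+y.b, x.c+y.c, x.d+y.d⟩⟩
instance : Neg Z4 := ⟨fun x => ⟨-x.a, -x.b, -x.c, -x.d⟩⟩
instance : Mul Z4 := ⟨fun x y =>
  ⟨x.a*y.a, x.a*y.b + x.b*y.a, x.a*y.c + x.c*y.a, x.a*y.d + x.d*y.a + x.b*y.c + x.c*y.b⟩⟩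

@[simp] lemma zero_a : (0 : Z4).a = 0 := rfl
@[simp] lemma zero_b : (0 : Z4).b = 0 := rfl
@[simp] lemma zero_c : (0 : Z4).c = 0 := rfl
@[simp] lemma zero_d : (0 : Z4).d = 0 := rfl
@[simp] lemma one_a : (1 : Z4).a = 1 := rfl
@[simp] lemma one_b : (1 : Z4).b = 0 := rfl
@[simp] lemma one_c : (1 : Z4).c = 0 := rfl
@[simp] lemma one_d : (1 : Z4).d = 0 := rfl
@[simp] lemma add_a (x y : Z4) : (x+y).a = x.a+y.a := rfl
@[simp] lemma add_b (x y : Z4) : (x+y).b = x.b+y.b := rfl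
@[simp] lemma add_c (x y : Z4) : (x+y).c = x.c+y.c := rfl
@[simp] lemma add_d (x y : Z4) : (x+y).d = x.d+y.d := rfl
@[simp] lemma neg_a (x : Z4) : (-x).a = -x.a := rfl
@[simp] lemma neg_b (x : Z4) : (-x).b = -x.b := rfl
@[simp] lemma neg_c (x : Z4) : (-x).c = -x.c := rfl
@[simp] lemma neg_d (x : Z4) : (-x).d = -x.d := rfl
@[simp] lemma mul_a (x y : Z4) : (x*y).a = x.a*y.a := rfl
@[simp] lemma mul_b (x y : Z4) : (x*y).b = x.a*y.b + x.b*y.a := rfl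
@[simp] lemma mul_c (x y : Z4) : (x*y).c = x.a*y.c + x.c*y.a := rfl
@[simp] lemma mul_d (x y : Z4) : (x*y).d = x.a*y.d + x.d*y.a + x.b*y.c + x.c*y.b := rfl

instance : CommRing Z4 where
  add_assoc := by intros; ext <;> simp <;> ring
  zero_add := by intros; ext <;> simp
  add_zero := by intros; ext <;> simp
  add_comm := by intros; ext <;> simp <;> ring
  neg_add_cancel := by intros; ext <;> simp
  mul_assoc := by intros; ext <;> simp <;> ring
  one_mul := by intros; ext <;> simp
  mul_one := by intros; ext <;> simp
  left_distrib := by intros; ext <;> simp <;> ring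
  right_distrib := by intros; ext <;> simp <;> ring
  zero_mul := by intros; ext <;> simp
  mul_zero := by intros; ext <;> simp
  mul_comm := by intros; ext <;> simp <;> ring
  natCast n := ⟨n, 0, 0, 0⟩
  natCast_zero := by ext <;> simp
  natCast_succ := by intros; ext <;> simp
  intCast n := ⟨n, 0, 0, 0⟩
  intCast_ofNat := by intros; ext <;> rfl
  intCast_negSucc := by
    intro n
    show (⟨Int.negSucc n, 0,0,0⟩ : Z4) = -(⟨((n+1:ℕ):ℤ),0,0,0⟩ : Z4)
    ext <;> simp [Int.negSucc_eq] <;> push_cast <;> ring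
  nsmul := nsmulRec
  zsmul := zsmulRec

@[simp] lemma intCast_a (n : ℤ) : (n : Z4).a = n := rfl
@[simp] lemma intCast_b (n : ℤ) : (n : Z4).b = 0 := rfl
@[simp] lemma intCast_c (n : ℤ) : (n : Z4).c = 0 := rfl
@[simp] lemma intCast_d (n : ℤ) : (n : Z4).d = 0 := rfl

@[simp] lemma zsmul_a (n : ℤ) (x : Z4) : (n • x).a = n * x.a := by
  rw [zsmul_eq_mul]; simp
@[simp] lemma zsmul_b (n : ℤ) (x : Z4) : (n • x).b = n * x.b := by
  rw [zsmul_eq_mul]; simp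
@[simp] lemma zsmul_c (n : ℤ) (x : Z4) : (n • x).c = n * x.c := by
  rw [zsmul_eq_mul]; simp
@[simp] lemma zsmul_d (n : ℤ) (x : Z4) : (n • x).d = n * x.d := by
  rw [zsmul_eq_mul]; simp

/-- e -/
def e : Z4 := ⟨0,1,0,0⟩
/-- f -/
def f : Z4 := ⟨0,0,1,0⟩

@[simp] lemma e_a : e.a = 0 := rfl
@[simp] lemma e_b : e.b = 1 := rfl
@[simp] lemma e_c : e.c = 0 := rfl
@[simp] lemma e_d : e.d = 0 := rfl
@[simp] lemma f_a : f.a = 0 := rfl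
@[simp] lemma f_b : f.b = 0 := rfl
@[simp] lemma f_c : f.c = 1 := rfl
@[simp] lemma f_d : f.d = 0 := rfl

end Z4



/-!
Context: for a partition λ = (λ_1,…,λ_m) of n (so λ_1 ≥ … ≥ λ_m ≥ 1 and
Σλ_i = n), let R_λ := ℤ[x_{i,j}]/(x_{i,1}², x_{i,j}² − x_{i,1}x_{i,j} for
2 ≤ j ≤ λ_i), the integral cohomology ring of the ℚ-trivial Bott manifold
𝓗_λ = 𝓗_{λ_1} × ⋯ × 𝓗_{λ_m}.  The degree-2 part H² of R_λ is the free
abelian group with basis the images of all the x_{i,j}.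

STATEMENT 10: Let λ = (λ_1,…,λ_m) and λ' = (λ'_1,…,λ'_{m'}) be partitions of
n and let φ : R_λ → R_{λ'} be a graded ring isomorphism.  Then there is a
bijection τ : {1,…,m} → {1,…,m'} with λ'_{τ(i)} = λ_i for all i, such that φ
maps the subring of R_λ generated by x_{i,1},…,x_{i,λ_i} onto the subring of
R_{λ'} generated by x_{τ(i),1},…,x_{τ(i),λ'_{τ(i)}}.
-/

open MvPolynomial

noncomputable section

/-- The defining relations x_{i,1}², x_{i,j}² − x_{i,1}x_{i,j} (j ≥ 2) of R_λ. -/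
def prel (m : ℕ) (lam : Fin m → ℕ) (p : Σ i : Fin m, Fin (lam i)) :
    MvPolynomial (Σ i : Fin m, Fin (lam i)) ℤ :=
  X p ^ 2 -
    (if p.2.val = 0 then 0
      else X (⟨p.1, ⟨0, Nat.lt_of_le_of_lt (Nat.zero_le _) p.2.isLt⟩⟩ :
        Σ i : Fin m, Fin (lam i))) * X p

/-- R_λ, the integral cohomology ring of 𝓗_λ. -/
abbrev PRing (m : ℕ) (lam : Fin m → ℕ) : Type :=
  MvPolynomial (Σ i : Fin m, Fin (lam i)) ℤ ⧸ Ideal.span (Set.range (prel m lam))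

/-- The image x_{i,j} of X (i,j) in R_λ. -/
def px (m : ℕ) (lam : Fin m → ℕ) (p : Σ i : Fin m, Fin (lam i)) : PRing m lam :=
  Ideal.Quotient.mk _ (X p)


namespace PP

variable {m : ℕ} {lam : Fin m → ℕ}

/-- the index (i, 0) for p = (i, j). -/
def z (p : Σ i : Fin m, Fin (lam i)) : Σ i : Fin m, Fin (lam i) :=
  ⟨p.1, ⟨0, Nat.lt_of_le_of_lt (Nat.zero_le _) p.2.isLt⟩⟩

@[simp] lemma z_fst (p : Σ i : Fin m, Fin (lam i)) : (z p).1 = p.1 := rfl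

lemma px_sq (p : Σ i : Fin m, Fin (lam i)) :
    px m lam p * px m lam p = px m lam (z p) * px m lam p := by
  have h : Ideal.Quotient.mk (Ideal.span (Set.range (prel m lam))) (prel m lam p) = 0 :=
    Ideal.Quotient.eq_zero_iff_mem.mpr (Ideal.subset_span ⟨p, rfl⟩)
  rw [prel, map_sub, map_mul, map_pow, sub_eq_zero, sq] at h
  rcases eq_or_ne p.2.val 0 with h0 | h0
  · have hz : z p = p := by
      rcases p with ⟨i, j⟩
      simp only [z]
      congr 1
      exact (Fin.ext h0.symm : (⟨0, _⟩ : Fin (lam i)) = j)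
    rw [hz]
  · rw [if_neg h0] at h
    exact h

lemma px_sq_zero (p : Σ i : Fin m, Fin (lam i)) (h0 : p.2.val = 0) :
    px m lam p * px m lam p = 0 := by
  have h : Ideal.Quotient.mk (Ideal.span (Set.range (prel m lam))) (prel m lam p) = 0 :=
    Ideal.Quotient.eq_zero_iff_mem.mpr (Ideal.subset_span ⟨p, rfl⟩)
  rw [prel, if_pos h0, map_sub, map_mul, map_pow, sub_eq_zero, sq, map_zero, zero_mul] at h
  exact h

lemma key0 (x y : Z4) (hx : x = Z4.e ∨ x = 0) (hy : y = Z4.e ∨ y = 0) : x * y = 0 := by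
  rcases hx with rfl | rfl <;> rcases hy with rfl | rfl <;> ext <;> simp

/-- evaluation ring hom to Z4 given a valid assignment of variables. -/
def evalP (v : (Σ i : Fin m, Fin (lam i)) → Z4)
    (hv : ∀ p, v p * v p = (if p.2.val = 0 then 0 else v (z p)) * v p) :
    PRing m lam →+* Z4 := by
  refine Ideal.Quotient.lift _ (MvPolynomial.eval₂Hom (Int.castRingHom Z4) v) ?_
  intro a ha
  refine (Ideal.span_le.mpr ?_ : _ ≤ RingHom.ker (MvPolynomial.eval₂Hom (Int.castRingHom Z4) v)) ha
  rintro _ ⟨p, rfl⟩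
  simp only [SetLike.mem_coe, RingHom.mem_ker, prel, map_sub, map_mul, map_pow,
    coe_eval₂Hom, eval₂_X, apply_ite (eval₂ (Int.castRingHom Z4) v), eval₂_zero]
  have h := hv p
  split_ifs at h ⊢ with hc <;> rw [sub_eq_zero, sq] <;> simpa [z] using h

@[simp] lemma evalP_px (v : (Σ i : Fin m, Fin (lam i)) → Z4) (hv) (p) :
    evalP v hv (px m lam p) = v p := by
  simp [evalP, px]
  erw [Ideal.Quotient.lift_mk, eval₂Hom_X']

lemma evalP_repr (v : (Σ i : Fin m, Fin (lam i)) → Z4) (hv)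
    (c : (Σ i : Fin m, Fin (lam i)) → ℤ) :
    evalP v hv (∑ p, c p • px m lam p) = ∑ p, c p • v p := by
  rw [map_sum]
  exact Finset.sum_congr rfl fun p _ => by rw [map_zsmul, evalP_px]

lemma coord_hv (q : Σ i : Fin m, Fin (lam i)) :
    ∀ p, (fun r => if r = q then Z4.e else (0:Z4)) p * (fun r => if r = q then Z4.e else 0) p =
      (if p.2.val = 0 then 0 else (fun r => if r = q then Z4.e else (0:Z4)) (z p)) *
        (fun r => if r = q then Z4.e else 0) p := by
  intro p
  have hval : ∀ r, (if r = q then Z4.e else (0:Z4)) = Z4.e ∨ (if r = q then Z4.e else 0) = 0 := by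
    intro r; split_ifs <;> simp
  rw [key0 _ _ (hval p) (hval p), key0 _ _ ?_ (hval p)]
  split_ifs with hc
  · exact Or.inr rfl
  · exact hval (z p)

/-- coordinate of y at q (meaningful on the span of the px's). -/
def coord (q : Σ i : Fin m, Fin (lam i)) (y : PRing m lam) : ℤ :=
  (evalP (fun r => if r = q then Z4.e else 0) (coord_hv q) y).b

@[simp] lemma coord_px (q p : Σ i : Fin m, Fin (lam i)) :
    coord q (px m lam p) = if p = q then 1 else 0 := by
  simp only [coord, evalP_px]
  split_ifs <;> rfl

def bHom : Z4 →+ ℤ := { toFun := Z4.b, map_zero' := rfl, map_add' := fun _ _ => rfl }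

lemma coord_sum (q : Σ i : Fin m, Fin (lam i)) (c : (Σ i : Fin m, Fin (lam i)) → ℤ) :
    coord q (∑ p, c p • px m lam p) = c q := by
  unfold coord
  rw [evalP_repr]
  have : (∑ p, c p • if p = q then Z4.e else 0).b
      = ∑ p, (c p • if p = q then Z4.e else (0:Z4)).b := map_sum bHom _ _
  rw [this]
  have : ∀ p : Σ i : Fin m, Fin (lam i), (c p • if p = q then Z4.e else (0:Z4)).b
      = if p = q then c p else 0 := by
    intro p; split_ifs <;> simp
  rw [Finset.sum_congr rfl fun p _ => this p, Finset.sum_ite_eq' Finset.univ q c]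
  simp

def coordHom (q : Σ i : Fin m, Fin (lam i)) : PRing m lam →+ ℤ :=
  bHom.comp ((evalP (fun r => if r = q then Z4.e else 0) (coord_hv q)).toAddMonoidHom)

lemma coord_eq_coordHom (q : Σ i : Fin m, Fin (lam i)) (y : PRing m lam) :
    coord q y = coordHom q y := rfl

lemma coord_zsmul (q : Σ i : Fin m, Fin (lam i)) (c : ℤ) (y : PRing m lam) :
    coord q (c • y) = c * coord q y := by
  rw [coord_eq_coordHom, coord_eq_coordHom, map_zsmul, zsmul_eq_mul]
  simp

lemma exists_repr {y : PRing m lam} (hy : y ∈ Submodule.span ℤ (Set.range (px m lam))) :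
    y = ∑ p, coord p y • px m lam p := by
  obtain ⟨c, rfl⟩ := (Submodule.mem_span_range_iff_exists_fun ℤ).mp hy
  exact (Finset.sum_congr rfl fun p _ => by rw [coord_sum]).symm

lemma coord_zero (q : Σ i : Fin m, Fin (lam i)) : coord q (0 : PRing m lam) = 0 := by
  rw [coord_eq_coordHom, map_zero]

lemma px_ne_zero (p : Σ i : Fin m, Fin (lam i)) : px m lam p ≠ 0 := by
  intro h
  have := coord_px p p
  rw [h, coord_zero, if_pos rfl] at this
  exact one_ne_zero this.symm

lemma sum_pair {p₁ p₂ : Σ i : Fin m, Fin (lam i)} (h : p₁ ≠ p₂)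
    (c : (Σ i : Fin m, Fin (lam i)) → ℤ) (E F : Z4) :
    ∑ p, c p • (if p = p₁ then E else if p = p₂ then F else 0) = c p₁ • E + c p₂ • F := by
  have step : ∀ p, c p • (if p = p₁ then E else if p = p₂ then F else 0)
      = (if p = p₁ then c p • E else 0) + (if p = p₂ then c p • F else 0) := by
    intro p
    by_cases h1 : p = p₁
    · subst h1; rw [if_pos rfl, if_pos rfl, if_neg h, add_zero]
    · rw [if_neg h1, if_neg h1, zero_add]
      split_ifs <;> simp
  rw [Finset.sum_congr rfl fun p _ => step p, Finset.sum_add_distrib,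
    Finset.sum_ite_eq' Finset.univ p₁ (fun p => c p • E),
    Finset.sum_ite_eq' Finset.univ p₂ (fun p => c p • F)]
  simp

/-- the pair detector assignment -/
def vpair (p₁ p₂ : Σ i : Fin m, Fin (lam i)) (E F : Z4)
    (r : Σ i : Fin m, Fin (lam i)) : Z4 :=
  if r = p₁ then E else if r = p₂ then F else 0

lemma evalP_pair {y : PRing m lam} (hy : y ∈ Submodule.span ℤ (Set.range (px m lam)))
    {p₁ p₂ : Σ i : Fin m, Fin (lam i)} (h : p₁ ≠ p₂) (E F : Z4) (hv) :
    evalP (vpair p₁ p₂ E F) hv y = coord p₁ y • E + coord p₂ y • F := by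
  conv_lhs => rw [exists_repr hy]
  rw [evalP_repr]
  exact sum_pair h _ E F

lemma pair_mul_d (A B A' B' : ℤ) (E F : Z4) (hE : E.a = 0) (hF : F.a = 0) :
    ((A • E + B • F) * (A' • E + B' • F)).d =
      (A*A')*(2*E.b*E.c) + (A*B' + B*A')*(E.b*F.c + E.c*F.b) + (B*B')*(2*F.b*F.c) := by
  simp [hE, hF]; ring

lemma z_ne {p : Σ i : Fin m, Fin (lam i)} (h : p.2.val ≠ 0) : z p ≠ p := by
  intro he
  exact h (congrArg (fun q : Σ i : Fin m, Fin (lam i) => q.2.val) he).symm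

/-- validity of the e/f pair detector -/
lemma pair_hv_ef {p₁ p₂ : Σ i : Fin m, Fin (lam i)} (h12 : p₁ ≠ p₂)
    (hA : p₁.2.val ≠ 0 → z p₁ ≠ p₂) (hB : p₂.2.val ≠ 0 → z p₂ ≠ p₁) :
    ∀ p, vpair p₁ p₂ Z4.e Z4.f p * vpair p₁ p₂ Z4.e Z4.f p =
      (if p.2.val = 0 then 0 else vpair p₁ p₂ Z4.e Z4.f (z p)) * vpair p₁ p₂ Z4.e Z4.f p := by
  intro p
  by_cases h1 : p = p₁
  · subst h1
    rw [vpair, if_pos rfl]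
    by_cases h0 : p.2.val = 0
    · rw [if_pos h0]
      ext <;> simp [Z4.e]
    · rw [if_neg h0, vpair, if_neg (z_ne h0), if_neg (hA h0)]
      ext <;> simp [Z4.e]
  · by_cases h2 : p = p₂
    · subst h2
      rw [vpair, if_neg h1, if_pos rfl]
      by_cases h0 : p.2.val = 0
      · rw [if_pos h0]
        ext <;> simp [Z4.f]
      · rw [if_neg h0, vpair, if_neg (hB h0), if_neg (z_ne h0)]
        ext <;> simp [Z4.f]
    · rw [vpair, if_neg h1, if_neg h2]
      rw [mul_zero, mul_zero]

/-- Claim A: square-zero elements of H² have coordinates multiplying to zero across blocks,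
    and more generally for the detector at (p₁, p₂). -/
lemma claimA {u : PRing m lam} (hu : u ∈ Submodule.span ℤ (Set.range (px m lam)))
    (huu : u * u = 0) {p q : Σ i : Fin m, Fin (lam i)} (hne : p.1 ≠ q.1) :
    coord p u * coord q u = 0 := by
  have hpq : p ≠ q := fun h => hne (congrArg Sigma.fst h)
  have hA : p.2.val ≠ 0 → z p ≠ q := fun _ h => hne (by rw [← h]; rfl)
  have hB : q.2.val ≠ 0 → z q ≠ p := fun _ h => hne (by rw [← h]; rfl)
  have hv := pair_hv_ef hpq hA hB
  have h := congrArg (evalP (vpair p q Z4.e Z4.f) hv) huu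
  rw [map_mul, map_zero, evalP_pair hu hpq] at h
  have hd := congrArg Z4.d h
  rw [pair_mul_d _ _ _ _ _ _ rfl rfl] at hd
  ring_nf at hd ⊢
  simp only [Z4.e_b, Z4.e_c, Z4.f_b, Z4.f_c, Z4.zero_d] at hd
  linarith [hd, mul_comm (coord p u) (coord q u)]

/-- Claim C: parity constraint within a block for square-zero elements. -/
lemma claimC {u : PRing m lam} (hu : u ∈ Submodule.span ℤ (Set.range (px m lam)))
    (huu : u * u = 0) {p : Σ i : Fin m, Fin (lam i)} (hp : p.2.val ≠ 0) :
    coord p u * (coord p u + 2 * coord (z p) u) = 0 := by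
  have hne : p ≠ z p := (z_ne hp).symm
  have hv : ∀ r, vpair p (z p) (Z4.e + Z4.f) (⟨0,2,0,0⟩ : Z4) r *
        vpair p (z p) (Z4.e + Z4.f) (⟨0,2,0,0⟩ : Z4) r =
      (if r.2.val = 0 then 0 else vpair p (z p) (Z4.e + Z4.f) (⟨0,2,0,0⟩ : Z4) (z r)) *
        vpair p (z p) (Z4.e + Z4.f) (⟨0,2,0,0⟩ : Z4) r := by
    intro r
    by_cases h1 : r = p
    · subst h1
      rw [vpair, if_pos rfl, if_neg hp]
      have hz : z r ≠ r := z_ne hp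
      rw [vpair, if_neg hz, if_pos rfl]
      ext <;> simp [Z4.e, Z4.f]
    · by_cases h2 : r = z p
      · subst h2
        have h0 : (z p).2.val = 0 := rfl
        rw [vpair, if_neg h1, if_pos rfl, if_pos h0, zero_mul]
        ext <;> simp [Z4.e, Z4.f]
      · rw [vpair, if_neg h1, if_neg h2, mul_zero, mul_zero]
  have h := congrArg (evalP (vpair p (z p) (Z4.e + Z4.f) (⟨0,2,0,0⟩ : Z4)) hv) huu
  rw [map_mul, map_zero, evalP_pair hu hne] at h
  have hd := congrArg Z4.d h
  rw [pair_mul_d _ _ _ _ _ _ rfl rfl] at hd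
  simp only [Z4.add_b, Z4.add_c, Z4.e_b, Z4.e_c, Z4.f_b, Z4.f_c, Z4.zero_d] at hd
  ring_nf at hd ⊢
  linarith [hd]

/-- Claim B: rigidity of block supports. -/
lemma claimB {u w : PRing m lam}
    (hu : u ∈ Submodule.span ℤ (Set.range (px m lam)))
    (hw : w ∈ Submodule.span ℤ (Set.range (px m lam)))
    (heq : w * w = u * w)
    {p₁ : Σ i : Fin m, Fin (lam i)} (h1 : p₁.2.val = 0)
    (hodd : coord p₁ u % 2 = 1)
    {q : Σ i : Fin m, Fin (lam i)} (hq : q.1 ≠ p₁.1) (hqu : coord q u = 0) :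
    coord q w = 0 := by
  have hne : p₁ ≠ q := fun h => hq (congrArg Sigma.fst h).symm
  have hv := pair_hv_ef hne (fun h0 => absurd h1 h0)
    (fun _ h => hq (by rw [← h]; rfl))
  have h := congrArg (evalP (vpair p₁ q Z4.e Z4.f) hv) heq
  rw [map_mul, map_mul, evalP_pair hu hne, evalP_pair hw hne] at h
  have hd := congrArg Z4.d h
  rw [pair_mul_d _ _ _ _ _ _ rfl rfl, pair_mul_d _ _ _ _ _ _ rfl rfl, hqu] at hd
  simp only [Z4.e_b, Z4.e_c, Z4.f_b, Z4.f_c] at hd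
  set A := coord p₁ w
  set B := coord q w
  set Au := coord p₁ u
  have hfac : B * (2 * A - Au) = 0 := by ring_nf at hd ⊢; linarith [hd]
  rcases mul_eq_zero.mp hfac with hB | hB
  · exact hB
  · omega

end PP

section Main

open PP

variable {m m' : ℕ} {lam : Fin m → ℕ} {lam' : Fin m' → ℕ}

lemma key_block (φ : PRing m lam ≃+* PRing m' lam')
    (hφ : φ '' (Submodule.span ℤ (Set.range (px m lam)) : Set (PRing m lam))
        = (Submodule.span ℤ (Set.range (px m' lam')) : Set (PRing m' lam')))
    (i : Fin m) (h0i : 0 < lam i) :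
    ∃ t : Fin m', ∀ (j : Fin (lam i)) (q : Σ k : Fin m', Fin (lam' k)),
      q.1 ≠ t → coord q (φ (px m lam ⟨i, j⟩)) = 0 := by
  classical
  have hmem : ∀ p : Σ k : Fin m, Fin (lam k),
      φ (px m lam p) ∈ Submodule.span ℤ (Set.range (px m' lam')) := by
    intro p
    have : φ (px m lam p) ∈ φ '' (Submodule.span ℤ (Set.range (px m lam)) : Set (PRing m lam)) :=
      Set.mem_image_of_mem φ (Submodule.subset_span ⟨p, rfl⟩)
    rw [hφ] at this
    exact this
  set u := φ (px m lam ⟨i, ⟨0, h0i⟩⟩) with hu_def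
  have hu_mem : u ∈ Submodule.span ℤ (Set.range (px m' lam')) := hmem _
  have huu : u * u = 0 := by
    rw [← map_mul, px_sq_zero _ rfl, map_zero]
  have hu0 : u ≠ 0 := by
    intro h
    apply px_ne_zero (⟨i, ⟨0, h0i⟩⟩ : Σ k : Fin m, Fin (lam k))
    apply φ.injective
    rw [map_zero, ← hu_def]
    exact h
  have hex : ∃ p₀ : Σ k : Fin m', Fin (lam' k), coord p₀ u ≠ 0 := by
    by_contra hall
    push_neg at hall
    exact hu0 ((exists_repr hu_mem).trans
      (Finset.sum_eq_zero fun p _ => by rw [hall p, zero_smul]))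
  obtain ⟨p₀, hp₀⟩ := hex
  refine ⟨p₀.1, ?_⟩
  have hsupp : ∀ q : Σ k : Fin m', Fin (lam' k), q.1 ≠ p₀.1 → coord q u = 0 := by
    intro q hq
    rcases mul_eq_zero.mp (claimA hu_mem huu (p := q) (q := p₀) hq) with h | h
    · exact h
    · exact absurd h hp₀
  have hodd : coord (z p₀) u % 2 = 1 := by
    by_contra heven
    have hev : ∀ q : Σ k : Fin m', Fin (lam' k), 2 ∣ coord q u := by
      intro q
      by_cases hq1 : q.1 = p₀.1
      · by_cases hq0 : q.2.val = 0
        · have hqz : q = z p₀ :=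
            Sigma.ext hq1 ((Fin.heq_ext_iff (by rw [hq1]; rfl)).mpr (by rw [hq0]; rfl))
          rw [hqz]
          omega
        · rcases mul_eq_zero.mp (claimC hu_mem huu hq0) with h | h
          · exact ⟨0, by omega⟩
          · exact ⟨-(coord (z q) u), by omega⟩
      · rw [hsupp q hq1]
        exact ⟨0, rfl⟩
    have hu2 : u = (2:ℤ) • ∑ q, (coord q u / 2) • px m' lam' q := by
      conv_lhs => rw [exists_repr hu_mem]
      rw [Finset.smul_sum]
      exact Finset.sum_congr rfl fun q _ => by
        rw [smul_smul, Int.mul_ediv_cancel' (hev q)]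
    have hyin : (∑ q, (coord q u / 2) • px m' lam' q)
        ∈ (Submodule.span ℤ (Set.range (px m' lam')) : Set (PRing m' lam')) :=
      Submodule.sum_mem _ fun q _ => Submodule.smul_mem _ _ (Submodule.subset_span ⟨q, rfl⟩)
    rw [← hφ] at hyin
    obtain ⟨v₀, _, hv₀⟩ := hyin
    have hpx2 : px m lam ⟨i, ⟨0, h0i⟩⟩ = (2:ℤ) • v₀ := by
      apply φ.injective
      rw [map_zsmul, hv₀, ← hu2]
    have h1 : coord (⟨i, ⟨0, h0i⟩⟩ : Σ k : Fin m, Fin (lam k))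
        (px m lam ⟨i, ⟨0, h0i⟩⟩) = 1 := by rw [coord_px, if_pos rfl]
    rw [hpx2, coord_zsmul] at h1
    omega
  intro j q hq
  have heq : φ (px m lam ⟨i, j⟩) * φ (px m lam ⟨i, j⟩) = u * φ (px m lam ⟨i, j⟩) := by
    have h2 := congrArg φ (px_sq ⟨i, j⟩)
    rw [map_mul, map_mul] at h2
    exact h2
  exact claimB hu_mem (hmem _) heq (p₁ := z p₀) rfl hodd hq (hsupp q hq)

end Main

namespace PP

variable {m : ℕ} {lam : Fin m → ℕ}

def blockSpan (lam : Fin m → ℕ) (t : Fin m) : Submodule ℤ (PRing m lam) :=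
  Submodule.span ℤ (Set.range fun j : Fin (lam t) => px m lam ⟨t, j⟩)

lemma mem_blockSpan_of_coord {y : PRing m lam}
    (hy : y ∈ Submodule.span ℤ (Set.range (px m lam)))
    (t : Fin m) (h : ∀ q : Σ i : Fin m, Fin (lam i), q.1 ≠ t → coord q y = 0) :
    y ∈ blockSpan lam t := by
  have hrep := exists_repr hy
  rw [hrep, ← Finset.univ_sigma_univ, Finset.sum_sigma]
  refine Submodule.sum_mem _ fun i' _ => Submodule.sum_mem _ fun j _ => ?_
  by_cases hi : i' = t
  · subst hi
    exact Submodule.smul_mem _ _ (Submodule.subset_span ⟨j, rfl⟩)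
  · rw [h ⟨i', j⟩ hi, zero_smul]
    exact Submodule.zero_mem _

lemma li_block (t : Fin m) :
    LinearIndependent ℤ (fun j : Fin (lam t) => px m lam ⟨t, j⟩) := by
  rw [Fintype.linearIndependent_iff]
  intro g hg j₀
  have h := congrArg (coordHom (⟨t, j₀⟩ : Σ i : Fin m, Fin (lam i))) hg
  rw [map_sum, map_zero] at h
  have hterm : ∀ j : Fin (lam t),
      coordHom (⟨t, j₀⟩ : Σ i : Fin m, Fin (lam i)) (g j • px m lam ⟨t, j⟩)
        = if j = j₀ then g j else 0 := by
    intro j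
    rw [map_zsmul, ← coord_eq_coordHom, coord_px, smul_eq_mul]
    by_cases hj : j = j₀
    · subst hj; rw [if_pos rfl, if_pos rfl, mul_one]
    · rw [if_neg (fun hh : (⟨t,j⟩ : Σ i : Fin m, Fin (lam i)) = ⟨t,j₀⟩ =>
        hj (eq_of_heq (Sigma.mk.inj_iff.mp hh).2)), if_neg hj, mul_zero]
  rw [Finset.sum_congr rfl fun j _ => hterm j, Finset.sum_ite_eq' Finset.univ j₀ g] at h
  simpa using h

lemma finrank_blockSpan (t : Fin m) :
    Module.finrank ℤ (blockSpan lam t) = lam t := by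
  rw [blockSpan, finrank_span_eq_card (li_block t), Fintype.card_fin]

lemma blockSpan_le_closure (t : Fin m) ⦃x : PRing m lam⦄ (hx : x ∈ blockSpan lam t) :
    x ∈ Subring.closure (Set.range fun j : Fin (lam t) => px m lam ⟨t, j⟩) := by
  refine Submodule.span_induction (fun y hy => Subring.subset_closure hy)
    (Subring.zero_mem _) (fun a b _ _ ha hb => Subring.add_mem _ ha hb)
    (fun c a _ ha => zsmul_mem ha c) hx

lemma map_span_mem {m' : ℕ} {lam' : Fin m' → ℕ} (ψ : PRing m lam ≃+* PRing m' lam')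
    {ι : Type*} (g : ι → PRing m lam) (S : Submodule ℤ (PRing m' lam'))
    (h : ∀ j, ψ (g j) ∈ S) : ∀ y ∈ Submodule.span ℤ (Set.range g), ψ y ∈ S := by
  intro y hy
  refine Submodule.span_induction ?_ ?_ ?_ ?_ hy
  · rintro _ ⟨j, rfl⟩; exact h j
  · rw [map_zero]; exact S.zero_mem
  · intro a b _ _ ha hb; rw [map_add]; exact S.add_mem ha hb
  · intro c a _ ha; rw [map_zsmul]; exact S.smul_mem c ha

end PP


open PP

theorem graded_iso_permutes_factors (n m m' : ℕ)
    (lam : Fin m → ℕ) (lam' : Fin m' → ℕ)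
    (hpos : ∀ i, 1 ≤ lam i) (hmono : Antitone lam) (hsum : ∑ i, lam i = n)
    (hpos' : ∀ i, 1 ≤ lam' i) (hmono' : Antitone lam') (hsum' : ∑ i, lam' i = n)
    (φ : PRing m lam ≃+* PRing m' lam')
    (hφ : φ '' (Submodule.span ℤ (Set.range (px m lam)) : Set (PRing m lam))
        = (Submodule.span ℤ (Set.range (px m' lam')) : Set (PRing m' lam'))) :
    ∃ τ : Fin m ≃ Fin m',
      (∀ i, lam' (τ i) = lam i) ∧
      ∀ i, φ '' (Subring.closure
              (Set.range fun j : Fin (lam i) => px m lam ⟨i, j⟩) : Set (PRing m lam))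
          = (Subring.closure
              (Set.range fun j : Fin (lam' (τ i)) => px m' lam' ⟨τ i, j⟩) :
                Set (PRing m' lam')) := by
  classical
  have hφsymm : ⇑φ.symm '' (Submodule.span ℤ (Set.range (px m' lam')) : Set (PRing m' lam'))
      = (Submodule.span ℤ (Set.range (px m lam)) : Set (PRing m lam)) := by
    rw [← hφ, ← Set.image_comp]
    have : (⇑φ.symm ∘ ⇑φ) = id := by
      funext x; exact φ.symm_apply_apply x
    rw [this, Set.image_id]
  choose t ht using fun i : Fin m => key_block φ hφ i (hpos i)
  choose s hs using fun k : Fin m' => key_block φ.symm hφsymm k (hpos' k)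
  -- membership of images in H²
  have hφmem : ∀ p : Σ k : Fin m, Fin (lam k),
      φ (px m lam p) ∈ Submodule.span ℤ (Set.range (px m' lam')) := by
    intro p
    have h1 : φ (px m lam p) ∈ φ '' (Submodule.span ℤ (Set.range (px m lam)) :
        Set (PRing m lam)) := Set.mem_image_of_mem φ (Submodule.subset_span ⟨p, rfl⟩)
    rw [hφ] at h1; exact h1
  have hφmem' : ∀ p : Σ k : Fin m', Fin (lam' k),
      φ.symm (px m' lam' p) ∈ Submodule.span ℤ (Set.range (px m lam)) := by
    intro p
    have h1 : φ.symm (px m' lam' p) ∈ ⇑φ.symm '' (Submodule.span ℤ (Set.range (px m' lam')) :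
        Set (PRing m' lam')) := Set.mem_image_of_mem φ.symm (Submodule.subset_span ⟨p, rfl⟩)
    rw [hφsymm] at h1; exact h1
  have hblock : ∀ (i : Fin m) (j : Fin (lam i)),
      φ (px m lam ⟨i, j⟩) ∈ blockSpan lam' (t i) :=
    fun i j => mem_blockSpan_of_coord (hφmem _) (t i) (fun q hq => ht i j q hq)
  have hblock' : ∀ (k : Fin m') (j : Fin (lam' k)),
      φ.symm (px m' lam' ⟨k, j⟩) ∈ blockSpan lam (s k) :=
    fun k j => mem_blockSpan_of_coord (hφmem' _) (s k) (fun q hq => hs k j q hq)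
  -- s ∘ t = id
  have hst : ∀ i, s (t i) = i := by
    intro i
    by_contra hne
    have h1 : px m lam ⟨i, ⟨0, hpos i⟩⟩ ∈ blockSpan lam (s (t i)) := by
      have h2 := map_span_mem φ.symm _ (blockSpan lam (s (t i)))
        (fun j' => hblock' (t i) j') _ (hblock i ⟨0, hpos i⟩)
      rwa [φ.symm_apply_apply] at h2
    obtain ⟨c, hc⟩ := (Submodule.mem_span_range_iff_exists_fun ℤ).mp h1
    have h5 := congrArg (coordHom (⟨i, ⟨0, hpos i⟩⟩ : Σ k : Fin m, Fin (lam k))) hc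
    rw [map_sum] at h5
    have hterm : ∀ j : Fin (lam (s (t i))),
        coordHom (⟨i, ⟨0, hpos i⟩⟩ : Σ k : Fin m, Fin (lam k))
          (c j • px m lam ⟨s (t i), j⟩) = 0 := by
      intro j
      rw [map_zsmul, ← coord_eq_coordHom, coord_px,
        if_neg (fun hh : (⟨s (t i), j⟩ : Σ k : Fin m, Fin (lam k)) = ⟨i, ⟨0, hpos i⟩⟩ =>
          hne (congrArg Sigma.fst hh)), smul_zero]
    rw [Finset.sum_congr rfl fun j _ => hterm j, Finset.sum_const_zero,
      ← coord_eq_coordHom, coord_px, if_pos rfl] at h5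
    exact one_ne_zero h5.symm
  have hts : ∀ k, t (s k) = k := by
    intro k
    by_contra hne
    have h1 : px m' lam' ⟨k, ⟨0, hpos' k⟩⟩ ∈ blockSpan lam' (t (s k)) := by
      have h2 := map_span_mem φ _ (blockSpan lam' (t (s k)))
        (fun j' => hblock (s k) j') _ (hblock' k ⟨0, hpos' k⟩)
      rwa [φ.apply_symm_apply] at h2
    obtain ⟨c, hc⟩ := (Submodule.mem_span_range_iff_exists_fun ℤ).mp h1
    have h5 := congrArg (coordHom (⟨k, ⟨0, hpos' k⟩⟩ : Σ l : Fin m', Fin (lam' l))) hc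
    rw [map_sum] at h5
    have hterm : ∀ j : Fin (lam' (t (s k))),
        coordHom (⟨k, ⟨0, hpos' k⟩⟩ : Σ l : Fin m', Fin (lam' l))
          (c j • px m' lam' ⟨t (s k), j⟩) = 0 := by
      intro j
      rw [map_zsmul, ← coord_eq_coordHom, coord_px,
        if_neg (fun hh : (⟨t (s k), j⟩ : Σ l : Fin m', Fin (lam' l)) = ⟨k, ⟨0, hpos' k⟩⟩ =>
          hne (congrArg Sigma.fst hh)), smul_zero]
    rw [Finset.sum_congr rfl fun j _ => hterm j, Finset.sum_const_zero,
      ← coord_eq_coordHom, coord_px, if_pos rfl] at h5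
    exact one_ne_zero h5.symm
  refine ⟨⟨t, s, hst, hts⟩, ?_, ?_⟩
  · -- sizes match via finrank
    intro i
    show lam' (t i) = lam i
    have himg : ⇑φ '' (blockSpan lam i : Set (PRing m lam)) = blockSpan lam' (t i) := by
      apply Set.Subset.antisymm
      · rintro _ ⟨y, hy, rfl⟩
        exact map_span_mem φ _ _ (hblock i) y hy
      · intro x hx
        refine ⟨φ.symm x, ?_, φ.apply_symm_apply x⟩
        have h2 := map_span_mem φ.symm _ (blockSpan lam (s (t i)))
          (fun j' => hblock' (t i) j') x hx
        rwa [hst i] at h2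
    have e0 : blockSpan lam i ≃ₗ[ℤ] blockSpan lam' (t i) := by
      refine LinearEquiv.ofSubmodules φ.toAddEquiv.toIntLinearEquiv _ _ ?_
      apply SetLike.coe_injective
      rw [Submodule.map_coe]
      simpa using himg
    rw [← finrank_blockSpan (lam := lam) i, ← finrank_blockSpan (lam := lam') (t i)]
    exact (LinearEquiv.finrank_eq e0).symm
  · -- subring images
    intro i
    show ⇑φ '' (Subring.closure
        (Set.range fun j : Fin (lam i) => px m lam ⟨i, j⟩) : Set (PRing m lam))
      = (Subring.closure
          (Set.range fun j : Fin (lam' (t i)) => px m' lam' ⟨t i, j⟩) : Set (PRing m' lam'))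
    have hcoe : ⇑φ '' (Subring.closure
        (Set.range fun j : Fin (lam i) => px m lam ⟨i, j⟩) : Set (PRing m lam))
        = ((Subring.closure (Set.range fun j : Fin (lam i) => px m lam ⟨i, j⟩)).map
            (φ : PRing m lam →+* PRing m' lam') : Set (PRing m' lam')) := by
      rw [Subring.coe_map]; rfl
    rw [hcoe, RingHom.map_closure]
    have hEq : Subring.closure ((φ : PRing m lam →+* PRing m' lam') ''
          (Set.range fun j : Fin (lam i) => px m lam ⟨i, j⟩))
        = Subring.closure (Set.range fun j : Fin (lam' (t i)) => px m' lam' ⟨t i, j⟩) := by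
      apply le_antisymm
      · rw [Subring.closure_le]
        rintro _ ⟨_, ⟨j, rfl⟩, rfl⟩
        exact blockSpan_le_closure (t i) (hblock i j)
      · rw [Subring.closure_le]
        rintro _ ⟨j', rfl⟩
        have h6 : φ.symm (px m' lam' ⟨t i, j'⟩) ∈ Subring.closure
            (Set.range fun j : Fin (lam i) => px m lam ⟨i, j⟩) := by
          apply blockSpan_le_closure i
          have h7 := hblock' (t i) j'
          rwa [hst i] at h7
        have h8 : px m' lam' ⟨t i, j'⟩ ∈ (Subring.closure
            (Set.range fun j : Fin (lam i) => px m lam ⟨i, j⟩)).map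
              (φ : PRing m lam →+* PRing m' lam') := by
          exact ⟨_, h6, φ.apply_symm_apply _⟩
        rwa [RingHom.map_closure] at h8
    rw [hEq]

end
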